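/- On the ℂ-vector space W = (ℂ[x,x⁻¹] ⊗ tℂ[t]) ⊕ ℂC, the ℂ-bilinear bracket given by [x^α f(t), x^β g(t)] = x^{α+β}(β f′(t)g(t) − α f(t)g′(t)) + δ_{α+β,0}·((α³−α)/6)·Res_t(t^{−3} f(t) g(t))·C and [C, ·] = 0 defines a Lie algebra structure over ℂ, and the linear map sending L(α,i) ↦ x^α t^{i+1} and C ↦ C is an isomorphism of Lie algebras from 𝔅 onto W. -/

import Mathlib

/-- The Lie algebra `𝔅` of Block type: a complex Lie algebra `B` equipped with a basis
`{L α i : α ∈ ℤ, i ∈ ℕ} ∪ {C}` where `C` is central and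
`[L α i, L β j] = ((i+1)β − (j+1)α)·L (α+β) (i+j) + δ_{α+β,0}·δ_{i+j,0}·((α³−α)/6)·C`. -/
structure BlockData (B : Type) [LieRing B] [LieAlgebra ℂ B] where
  L : ℤ → ℕ → B
  C : B
  central : ∀ x : B, ⁅C, x⁆ = 0
  bracket_L : ∀ (α β : ℤ) (i j : ℕ),
    ⁅L α i, L β j⁆
      = (((i : ℂ) + 1) * (β : ℂ) - ((j : ℂ) + 1) * (α : ℂ)) • L (α + β) (i + j)
        + (if α + β = 0 ∧ i + j = 0 then ((α : ℂ) ^ 3 - (α : ℂ)) / 6 else 0) • C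
  indep : LinearIndependent ℂ (Sum.elim (fun p : ℤ × ℕ => L p.1 p.2) (fun _ : Unit => C))
  span_top : Submodule.span ℂ
      (Set.range (Sum.elim (fun p : ℤ × ℕ => L p.1 p.2) (fun _ : Unit => C))) = ⊤

variable {B : Type} [LieRing B] [LieAlgebra ℂ B]
variable {V : Type} [AddCommGroup V] [Module ℂ V] [LieRingModule B V] [LieModule ℂ B V]

/-- A `ℤ`-grading `V = ⊕ₖ Vₖ` on a `𝔅`-module, compatible with the grading of `𝔅`:
`𝔅^(α)·Vₖ ⊆ V_{α+k}` (where `𝔅^(α) = span{L α i : i ≥ 0} ⊕ δ_{α,0} ℂ C`). -/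
structure GradedBMod (𝔟 : BlockData B) (V : Type) [AddCommGroup V] [Module ℂ V]
    [LieRingModule B V] [LieModule ℂ B V] where
  piece : ℤ → Submodule ℂ V
  isInternal : DirectSum.IsInternal piece
  lie_L_mem : ∀ (α : ℤ) (i : ℕ) (k : ℤ) (v : V), v ∈ piece k → ⁅𝔟.L α i, v⁆ ∈ piece (α + k)
  lie_C_mem : ∀ (k : ℤ) (v : V), v ∈ piece k → ⁅𝔟.C, v⁆ ∈ piece k

/-- A Lie submodule is graded if it is the (direct) sum of its intersections with the
graded pieces. -/
def GradedBMod.IsGradedSubmodule {𝔟 : BlockData B} (gr : GradedBMod 𝔟 V)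
    (W : LieSubmodule ℂ B V) : Prop :=
  (W : Submodule ℂ V) = ⨆ k : ℤ, (W : Submodule ℂ V) ⊓ gr.piece k

/-- A graded module is (graded-)irreducible if it is nonzero and has no graded submodule
other than `0` and `V`. -/
def GradedBMod.Irreducible {𝔟 : BlockData B} (gr : GradedBMod 𝔟 V) : Prop :=
  (∃ v : V, v ≠ 0) ∧
    ∀ W : LieSubmodule ℂ B V, gr.IsGradedSubmodule W → W = ⊥ ∨ W = ⊤

/-- Quasifinite: all graded pieces are finite dimensional. -/
def GradedBMod.Quasifinite {𝔟 : BlockData B} (gr : GradedBMod 𝔟 V) : Prop :=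
  ∀ k : ℤ, FiniteDimensional ℂ (gr.piece k)

/-- Uniformly bounded: the dimensions of the graded pieces are uniformly bounded. -/
def GradedBMod.UniformlyBounded {𝔟 : BlockData B} (gr : GradedBMod 𝔟 V) : Prop :=
  ∃ N : ℕ, ∀ k : ℤ, Module.rank ℂ (gr.piece k) ≤ N

/-- A module of the intermediate series: all graded pieces have dimension at most one. -/
def GradedBMod.IntermediateSeries {𝔟 : BlockData B} (gr : GradedBMod 𝔟 V) : Prop :=
  ∀ k : ℤ, Module.rank ℂ (gr.piece k) ≤ 1

/-- Highest weight module: generated by a nonzero `v ∈ V₀` which is a common eigenvector of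
all `L 0 i` and of `C` and is annihilated by all `L α i` with `α > 0`. -/
def GradedBMod.IsHighestWeight {𝔟 : BlockData B} (gr : GradedBMod 𝔟 V) : Prop :=
  ∃ v : V, v ≠ 0 ∧ v ∈ gr.piece 0 ∧
    (∀ i : ℕ, ∃ c : ℂ, ⁅𝔟.L 0 i, v⁆ = c • v) ∧ (∃ c : ℂ, ⁅𝔟.C, v⁆ = c • v) ∧
    (∀ α : ℤ, 0 < α → ∀ i : ℕ, ⁅𝔟.L α i, v⁆ = 0) ∧
    LieSubmodule.lieSpan ℂ B {v} = ⊤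

/-- Lowest weight module. -/
def GradedBMod.IsLowestWeight {𝔟 : BlockData B} (gr : GradedBMod 𝔟 V) : Prop :=
  ∃ v : V, v ≠ 0 ∧ v ∈ gr.piece 0 ∧
    (∀ i : ℕ, ∃ c : ℂ, ⁅𝔟.L 0 i, v⁆ = c • v) ∧ (∃ c : ℂ, ⁅𝔟.C, v⁆ = c • v) ∧
    (∀ α : ℤ, α < 0 → ∀ i : ℕ, ⁅𝔟.L α i, v⁆ = 0) ∧
    LieSubmodule.lieSpan ℂ B {v} = ⊤

noncomputable section

open TensorProduct

/-- The space `tℂ[t]` of polynomials with zero constant term. -/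
def tPoly : Submodule ℂ (Polynomial ℂ) := LinearMap.ker (Polynomial.lcoeff ℂ 0)

/-- The space `W = ℂ[x,x⁻¹] ⊗ tℂ[t] ⊕ ℂC`. -/
abbrev Wspace : Type := (LaurentPolynomial ℂ ⊗[ℂ] ↥tPoly) × ℂ

lemma tPoly_bracket_mem (α β : ℤ) (f g : tPoly) :
    (β : ℂ) • (Polynomial.derivative (f : Polynomial ℂ) * (g : Polynomial ℂ))
      - (α : ℂ) • ((f : Polynomial ℂ) * Polynomial.derivative (g : Polynomial ℂ)) ∈ tPoly := by
  have hf : (f : Polynomial ℂ).coeff 0 = 0 := f.2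
  have hg : (g : Polynomial ℂ).coeff 0 = 0 := g.2
  simp [tPoly, LinearMap.mem_ker, Polynomial.lcoeff_apply, Polynomial.mul_coeff_zero, hf, hg]

lemma Xpow_mem_tPoly (i : ℕ) : (Polynomial.X ^ (i + 1) : Polynomial ℂ) ∈ tPoly := by
  simp [tPoly, LinearMap.mem_ker, Polynomial.lcoeff_apply, Polynomial.coeff_X_pow]


namespace BlockAux

open Polynomial LaurentPolynomial TensorProduct

/-- Multiplication by `X` as a linear map `ℂ[t] →ₗ tℂ[t]`. -/
def mulX : Polynomial ℂ →ₗ[ℂ] tPoly where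
  toFun f := ⟨X * f, by
    simp [tPoly, LinearMap.mem_ker, Polynomial.lcoeff_apply, Polynomial.mul_coeff_zero]⟩
  map_add' f g := by apply Subtype.ext; simp [mul_add]
  map_smul' c f := by apply Subtype.ext; simp [mul_smul_comm]

lemma mulX_bij : Function.Bijective mulX := by
  constructor
  · intro f g h
    have h' : (X : Polynomial ℂ) * f = X * g := congrArg Subtype.val h
    exact mul_left_cancel₀ Polynomial.X_ne_zero h'
  · rintro ⟨g, hg⟩
    have hX : (X : Polynomial ℂ) ∣ g := Polynomial.X_dvd_iff.mpr hg
    obtain ⟨f, rfl⟩ := hX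
    exact ⟨f, Subtype.ext rfl⟩

/-- The basis `tᶦ⁺¹` of `tℂ[t]`. -/
def tBasis : Module.Basis ℕ ℂ tPoly :=
  (Polynomial.basisMonomials ℂ).map (LinearEquiv.ofBijective mulX mulX_bij)

lemma tBasis_apply (i : ℕ) : tBasis i = ⟨Polynomial.X ^ (i + 1), Xpow_mem_tPoly i⟩ := by
  apply Subtype.ext
  simp [tBasis, mulX, ← Polynomial.X_pow_eq_monomial, pow_succ, mul_comm]

/-- The basis `xᵃ` of `ℂ[x,x⁻¹]`. -/
def lBasis : Module.Basis ℤ ℂ (LaurentPolynomial ℂ) := AddMonoidAlgebra.basis ℤ ℂ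

lemma lBasis_apply (n : ℤ) : lBasis n = LaurentPolynomial.T n := rfl

/-- The basis of `W`. -/
def wBasis : Module.Basis ((ℤ × ℕ) ⊕ Unit) ℂ Wspace :=
  (lBasis.tensorProduct tBasis).prod (Module.Basis.singleton Unit ℂ)

lemma wBasis_inl (α : ℤ) (i : ℕ) :
    wBasis (Sum.inl (α, i))
      = (LaurentPolynomial.T α ⊗ₜ[ℂ] (⟨Polynomial.X ^ (i + 1), Xpow_mem_tPoly i⟩ : tPoly), 0) := by
  simp [wBasis, Module.Basis.prod_apply, Module.Basis.tensorProduct_apply, tBasis_apply, lBasis_apply]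

lemma wBasis_inr : wBasis (Sum.inr ()) = ((0 : LaurentPolynomial ℂ ⊗[ℂ] tPoly), (1 : ℂ)) := by
  simp [wBasis, Module.Basis.prod_apply]

/-- Structure constants. -/
def scF : (ℤ × ℕ) ⊕ Unit → (ℤ × ℕ) ⊕ Unit → Wspace
  | Sum.inl (α, i), Sum.inl (β, j) =>
      (((i : ℂ) + 1) * (β : ℂ) - ((j : ℂ) + 1) * (α : ℂ)) • wBasis (Sum.inl (α + β, i + j))
        + (if α + β = 0 ∧ i + j = 0 then ((α : ℂ) ^ 3 - (α : ℂ)) / 6 else 0) •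
            wBasis (Sum.inr ())
  | _, _ => 0

/-- The bracket on `W`. -/
def bb : Wspace →ₗ[ℂ] Wspace →ₗ[ℂ] Wspace :=
  wBasis.constr ℂ fun p => wBasis.constr ℂ fun q => scF p q

lemma scF_inl_inl (α β : ℤ) (i j : ℕ) :
    scF (Sum.inl (α, i)) (Sum.inl (β, j))
      = (((i : ℂ) + 1) * (β : ℂ) - ((j : ℂ) + 1) * (α : ℂ)) • wBasis (Sum.inl (α + β, i + j))
        + (if α + β = 0 ∧ i + j = 0 then ((α : ℂ) ^ 3 - (α : ℂ)) / 6 else 0) •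
            wBasis (Sum.inr ()) := rfl

lemma bb_basis (p q : (ℤ × ℕ) ⊕ Unit) : bb (wBasis p) (wBasis q) = scF p q := by
  simp [bb, Module.Basis.constr_basis]

end BlockAux

open BlockAux

set_option maxHeartbeats 2000000


/-- On `W = (ℂ[x,x⁻¹] ⊗ tℂ[t]) ⊕ ℂC`, the ℂ-bilinear bracket given by
`[x^α f(t), x^β g(t)] = x^{α+β}(β f′g − α f g′) + δ_{α+β,0}·((α³−α)/6)·Res_t(t^{−3} f g)·C`
and `[C, ·] = 0` defines a Lie algebra structure over ℂ, and the linear map sending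
`L(α,i) ↦ x^α t^{i+1}` and `C ↦ C` is an isomorphism of Lie algebras from `𝔅` onto `W`. -/


theorem block_realization (𝔟 : BlockData B) :
    ∃ b : Wspace →ₗ[ℂ] Wspace →ₗ[ℂ] Wspace,
      (∀ (α β : ℤ) (f g : tPoly),
        b (LaurentPolynomial.T α ⊗ₜ[ℂ] f, 0) (LaurentPolynomial.T β ⊗ₜ[ℂ] g, 0)
          = (LaurentPolynomial.T (α + β) ⊗ₜ[ℂ]
              (⟨(β : ℂ) • (Polynomial.derivative (f : Polynomial ℂ) * (g : Polynomial ℂ))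
                  - (α : ℂ) • ((f : Polynomial ℂ)
                      * Polynomial.derivative (g : Polynomial ℂ)),
                tPoly_bracket_mem α β f g⟩ : tPoly),
             if α + β = 0 then
               ((α : ℂ) ^ 3 - (α : ℂ)) / 6 * (((f : Polynomial ℂ) * (g : Polynomial ℂ)).coeff 2)
             else 0)) ∧
      (∀ w : Wspace, b (0, 1) w = 0) ∧
      (∀ w : Wspace, b w w = 0) ∧
      (∀ u v w : Wspace, b u (b v w) = b (b u v) w + b v (b u w)) ∧
      ∃ e : B ≃ₗ[ℂ] Wspace,
        (∀ u v : B, e ⁅u, v⁆ = b (e u) (e v)) ∧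
        (∀ (α : ℤ) (i : ℕ),
          e (𝔟.L α i)
            = (LaurentPolynomial.T α ⊗ₜ[ℂ]
                (⟨Polynomial.X ^ (i + 1), Xpow_mem_tPoly i⟩ : tPoly), 0)) ∧
        e 𝔟.C = (0, 1) := by
  classical
  -- a basis of `B`
  have hsp : ⊤ ≤ Submodule.span ℂ
      (Set.range (Sum.elim (fun p : ℤ × ℕ => 𝔟.L p.1 p.2) (fun _ : Unit => 𝔟.C))) :=
    𝔟.span_top.ge
  set bB : Module.Basis ((ℤ × ℕ) ⊕ Unit) ℂ B := Module.Basis.mk 𝔟.indep hsp with hbB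
  have bB_inl : ∀ (α : ℤ) (i : ℕ), bB (Sum.inl (α, i)) = 𝔟.L α i := fun α i => by
    rw [hbB, Module.Basis.mk_apply]; rfl
  have bB_inr : bB (Sum.inr ()) = 𝔟.C := by rw [hbB, Module.Basis.mk_apply]; rfl
  set e : B ≃ₗ[ℂ] Wspace := bB.equiv wBasis (Equiv.refl _) with hee
  have he : ∀ p, e (bB p) = wBasis p := fun p => by
    rw [hee, Module.Basis.equiv_apply, Equiv.refl_apply]
  have heL : ∀ (α : ℤ) (i : ℕ), e (𝔟.L α i) = wBasis (Sum.inl (α, i)) := fun α i => by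
    rw [← bB_inl α i]; exact he _
  have heC : e 𝔟.C = wBasis (Sum.inr ()) := by rw [← bB_inr]; exact he _
  -- `e` intertwines the brackets
  have hom : ∀ u v : B, e ⁅u, v⁆ = bb (e u) (e v) := by
    have key : (LinearMap.mk₂ ℂ (fun u v : B => ⁅u, v⁆)
          add_lie smul_lie lie_add lie_smul).compr₂ (e : B →ₗ[ℂ] Wspace)
        = (bb.comp (e : B →ₗ[ℂ] Wspace)).compl₂ (e : B →ₗ[ℂ] Wspace) := by
      apply bB.ext; intro p
      apply bB.ext; intro q
      simp only [LinearMap.compr₂_apply, LinearMap.mk₂_apply, LinearMap.compl₂_apply,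
        LinearMap.comp_apply, LinearEquiv.coe_coe, he, bb_basis]
      rcases p with ⟨α, i⟩ | u
      · rcases q with ⟨β, j⟩ | u'
        · rw [bB_inl, bB_inl, 𝔟.bracket_L, map_add, map_smul, map_smul, heL, heC]
          rfl
        · rw [bB_inl, bB_inr]
          have h0 : ⁅𝔟.L α i, 𝔟.C⁆ = (0 : B) := by
            rw [← lie_skew, 𝔟.central]; simp
          rw [h0, map_zero]
          rfl
      · rw [bB_inr, 𝔟.central, map_zero]
        rcases q with ⟨β, j⟩ | u' <;> rfl
    intro u v
    have h1 := LinearMap.ext_iff.mp key u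
    have h2 := LinearMap.ext_iff.mp h1 v
    simpa using h2
  -- the general bracket formula
  have hformula : ∀ (α β : ℤ) (f g : tPoly),
      bb (LaurentPolynomial.T α ⊗ₜ[ℂ] f, 0) (LaurentPolynomial.T β ⊗ₜ[ℂ] g, 0)
        = (LaurentPolynomial.T (α + β) ⊗ₜ[ℂ]
            (⟨(β : ℂ) • (Polynomial.derivative (f : Polynomial ℂ) * (g : Polynomial ℂ))
                - (α : ℂ) • ((f : Polynomial ℂ)
                    * Polynomial.derivative (g : Polynomial ℂ)),
              tPoly_bracket_mem α β f g⟩ : tPoly),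
           if α + β = 0 then
             ((α : ℂ) ^ 3 - (α : ℂ)) / 6 * (((f : Polynomial ℂ) * (g : Polynomial ℂ)).coeff 2)
           else 0) := by
    intro α β
    set j1 : tPoly →ₗ[ℂ] Wspace :=
      (LinearMap.inl ℂ _ ℂ).comp
        (TensorProduct.mk ℂ (LaurentPolynomial ℂ) tPoly (LaurentPolynomial.T α)) with hj1
    set j2 : tPoly →ₗ[ℂ] Wspace :=
      (LinearMap.inl ℂ _ ℂ).comp
        (TensorProduct.mk ℂ (LaurentPolynomial ℂ) tPoly (LaurentPolynomial.T β)) with hj2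
    set D : tPoly →ₗ[ℂ] tPoly →ₗ[ℂ] tPoly := LinearMap.mk₂ ℂ
      (fun f g => (⟨(β : ℂ) • (Polynomial.derivative (f : Polynomial ℂ) * (g : Polynomial ℂ))
          - (α : ℂ) • ((f : Polynomial ℂ) * Polynomial.derivative (g : Polynomial ℂ)),
        tPoly_bracket_mem α β f g⟩ : tPoly))
      (fun f₁ f₂ g => by
        apply Subtype.ext
        simp only [Submodule.coe_add, map_add, add_mul, mul_add, smul_add, smul_sub]
        abel)
      (fun c f g => by
        apply Subtype.ext
        simp only [SetLike.val_smul, map_smul, smul_mul_assoc, mul_smul_comm]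
        module)
      (fun f g₁ g₂ => by
        apply Subtype.ext
        simp only [Submodule.coe_add, map_add, add_mul, mul_add, smul_add, smul_sub]
        abel)
      (fun c f g => by
        apply Subtype.ext
        simp only [SetLike.val_smul, map_smul, smul_mul_assoc, mul_smul_comm]
        module) with hD
    set Cm : tPoly →ₗ[ℂ] tPoly →ₗ[ℂ] ℂ := LinearMap.mk₂ ℂ
      (fun f g => if α + β = 0 then
          ((α : ℂ) ^ 3 - (α : ℂ)) / 6 * (((f : Polynomial ℂ) * (g : Polynomial ℂ)).coeff 2)
        else 0)
      (fun f₁ f₂ g => by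
        split_ifs <;>
          simp [Submodule.coe_add, add_mul, mul_add] <;> ring)
      (fun c f g => by
        split_ifs <;>
          simp [SetLike.val_smul, smul_mul_assoc, Polynomial.coeff_smul, smul_eq_mul] <;> ring)
      (fun f g₁ g₂ => by
        split_ifs <;>
          simp [Submodule.coe_add, add_mul, mul_add] <;> ring)
      (fun c f g => by
        split_ifs <;>
          simp [SetLike.val_smul, mul_smul_comm, Polynomial.coeff_smul, smul_eq_mul] <;> ring)
      with hCm
    have key : (bb.comp j1).compl₂ j2
        = D.compr₂ ((LinearMap.inl ℂ _ ℂ).comp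
            (TensorProduct.mk ℂ (LaurentPolynomial ℂ) tPoly (LaurentPolynomial.T (α + β))))
          + Cm.compr₂ (LinearMap.inr ℂ (LaurentPolynomial ℂ ⊗[ℂ] tPoly) ℂ) := by
      apply tBasis.ext; intro i
      apply tBasis.ext; intro j
      simp only [LinearMap.compl₂_apply, LinearMap.comp_apply, LinearMap.add_apply,
        LinearMap.compr₂_apply, hj1, hj2, TensorProduct.mk_apply, LinearMap.inl_apply,
        LinearMap.inr_apply, tBasis_apply]
      have e1 : ((LaurentPolynomial.T α ⊗ₜ[ℂ]
            (⟨Polynomial.X ^ (i + 1), Xpow_mem_tPoly i⟩ : tPoly), (0 : ℂ)) : Wspace)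
          = wBasis (Sum.inl (α, i)) := (wBasis_inl α i).symm
      have e2 : ((LaurentPolynomial.T β ⊗ₜ[ℂ]
            (⟨Polynomial.X ^ (j + 1), Xpow_mem_tPoly j⟩ : tPoly), (0 : ℂ)) : Wspace)
          = wBasis (Sum.inl (β, j)) := (wBasis_inl β j).symm
      rw [e1, e2, bb_basis]
      have hval : (β : ℂ) • (Polynomial.derivative ((Polynomial.X : Polynomial ℂ) ^ (i + 1))
              * Polynomial.X ^ (j + 1))
            - (α : ℂ) • ((Polynomial.X : Polynomial ℂ) ^ (i + 1)
              * Polynomial.derivative ((Polynomial.X : Polynomial ℂ) ^ (j + 1)))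
          = (((i : ℂ) + 1) * (β : ℂ) - ((j : ℂ) + 1) * (α : ℂ)) •
              (Polynomial.X : Polynomial ℂ) ^ (i + j + 1) := by
        rw [Polynomial.derivative_X_pow, Polynomial.derivative_X_pow,
          Nat.add_sub_cancel, Nat.add_sub_cancel]
        rw [Polynomial.smul_eq_C_mul, Polynomial.smul_eq_C_mul, Polynomial.smul_eq_C_mul]
        push_cast
        simp only [map_add, map_sub, map_mul, map_one]
        ring
      have hDval : (D (⟨Polynomial.X ^ (i + 1), Xpow_mem_tPoly i⟩ : tPoly)
            (⟨Polynomial.X ^ (j + 1), Xpow_mem_tPoly j⟩ : tPoly))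
          = (((i : ℂ) + 1) * (β : ℂ) - ((j : ℂ) + 1) * (α : ℂ)) •
              (⟨Polynomial.X ^ (i + j + 1), Xpow_mem_tPoly (i + j)⟩ : tPoly) := by
        apply Subtype.ext
        rw [hD]
        simpa using hval
      have hCval : (Cm (⟨Polynomial.X ^ (i + 1), Xpow_mem_tPoly i⟩ : tPoly)
            (⟨Polynomial.X ^ (j + 1), Xpow_mem_tPoly j⟩ : tPoly))
          = if α + β = 0 ∧ i + j = 0 then ((α : ℂ) ^ 3 - (α : ℂ)) / 6 else 0 := by
        rw [hCm]
        simp only [LinearMap.mk₂_apply]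
        rw [show ((Polynomial.X : Polynomial ℂ) ^ (i + 1) * Polynomial.X ^ (j + 1))
            = Polynomial.X ^ (i + j + 2) by ring]
        rw [Polynomial.coeff_X_pow]
        by_cases hab : α + β = 0
        · rcases eq_or_ne (i + j) 0 with hij | hij
          · rw [if_pos hab, if_pos (show 2 = i + j + 2 by omega), if_pos ⟨hab, hij⟩, mul_one]
          · rw [if_pos hab, if_neg (show ¬ 2 = i + j + 2 by omega),
              if_neg (by tauto), mul_zero]
        · rw [if_neg hab, if_neg (by tauto)]
      rw [hDval, hCval, TensorProduct.tmul_smul]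
      rw [scF_inl_inl, wBasis_inl, wBasis_inr]
      ext
      · split_ifs <;> simp
      · split_ifs <;> simp
    intro f g
    have h1 := LinearMap.ext_iff.mp key f
    have h2 := LinearMap.ext_iff.mp h1 g
    simp only [LinearMap.compl₂_apply, LinearMap.comp_apply, LinearMap.add_apply,
      LinearMap.compr₂_apply, hj1, hj2, hD, hCm, TensorProduct.mk_apply,
      LinearMap.inl_apply, LinearMap.inr_apply, LinearMap.mk₂_apply] at h2
    rw [h2]
    ext
    · simp
    · simp
  -- assemble
  refine ⟨bb, hformula, ?_, ?_, ?_, ⟨e, hom, ?_, ?_⟩⟩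
  · intro w
    have h1 : ((0 : LaurentPolynomial ℂ ⊗[ℂ] tPoly), (1 : ℂ)) = e 𝔟.C := by
      rw [heC, wBasis_inr]
    rw [h1, ← e.apply_symm_apply w, ← hom, 𝔟.central, map_zero]
  · intro w
    rw [← e.apply_symm_apply w, ← hom]
    simp
  · intro u v w
    have h1 : e ⁅e.symm u, ⁅e.symm v, e.symm w⁆⁆ = bb u (bb v w) := by
      rw [hom, hom, e.apply_symm_apply, e.apply_symm_apply, e.apply_symm_apply]
    have h2 : e ⁅⁅e.symm u, e.symm v⁆, e.symm w⁆ = bb (bb u v) w := by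
      rw [hom, hom, e.apply_symm_apply, e.apply_symm_apply, e.apply_symm_apply]
    have h3 : e ⁅e.symm v, ⁅e.symm u, e.symm w⁆⁆ = bb v (bb u w) := by
      rw [hom, hom, e.apply_symm_apply, e.apply_symm_apply, e.apply_symm_apply]
    rw [← h1, ← h2, ← h3, ← map_add, leibniz_lie]
  · intro α i
    rw [heL, wBasis_inl]
  · rw [heC, wBasis_inr]
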